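/- arXiv:0909.2304 — 8 statements merged into one kernel-verified Lean document; each statement's English description precedes it below -/
import Mathlib

section
/- Let q = 2^n and let f ∈ F_q[x] be any polynomial. Then φ_f(x,y,y) is a square in F_q[x,y]; that is, there exists h ∈ F_q[x,y] with φ_f(x,y,y) = h(x,y)^2. -/
open MvPolynomial

/-- The polynomial `(x+y)(x+z)(y+z)` in `F[x,y,z]`. -/
noncomputable def e3 (F : Type*) [CommRing F] : MvPolynomial (Fin 3) F :=
  (X 0 + X 1) * (X 0 + X 2) * (X 1 + X 2)

/-- The polynomial `f(x) + f(y) + f(z) + f(x+y+z)` in `F[x,y,z]`. -/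
noncomputable def fsum {F : Type*} [CommRing F] (f : Polynomial F) :
    MvPolynomial (Fin 3) F :=
  Polynomial.aeval (X 0 : MvPolynomial (Fin 3) F) f +
    Polynomial.aeval (X 1 : MvPolynomial (Fin 3) F) f +
    Polynomial.aeval (X 2 : MvPolynomial (Fin 3) F) f +
    Polynomial.aeval (X 0 + X 1 + X 2 : MvPolynomial (Fin 3) F) f

/-- Substitution `x ↦ x, y ↦ y, z ↦ y`, from `F[x,y,z]` to `F[x,y]`. -/
noncomputable def substYY (F : Type*) [CommRing F] :
    Fin 3 → MvPolynomial (Fin 2) F := ![X 0, X 1, X 1]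

/-- Second derivative vanishes in characteristic two. -/
lemma deriv2_eq_zero {F : Type*} [CommRing F] [CharP F 2] (f : Polynomial F) :
    Polynomial.derivative (Polynomial.derivative f) = 0 := by
  ext m
  simp only [Polynomial.coeff_derivative, Polynomial.coeff_zero]
  have hz : (((m + 1) * (m + 1 + 1) : ℕ) : F) = 0 := by
    rw [CharP.cast_eq_zero_iff F 2]
    exact (Nat.even_mul_succ_self (m + 1)).two_dvd
  push_cast at hz ⊢
  linear_combination f.coeff (m + 1 + 1) * hz

theorem phi_on_diagonal_is_square
    (n : ℕ) (hn : 0 < n) (F : Type*) [Field F] [Fintype F]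
    (hF : Fintype.card F = 2 ^ n) (f : Polynomial F)
    (φ : MvPolynomial (Fin 3) F) (hφ : e3 F * φ = fsum f) :
    ∃ h : MvPolynomial (Fin 2) F, MvPolynomial.aeval (substYY F) φ = h ^ 2 := by
  -- characteristic 2
  haveI : CharP F (ringChar F) := ringChar.charP F
  obtain ⟨m, hp, hcard⟩ := FiniteField.card F (ringChar F)
  have hchar2 : ringChar F = 2 := by
    have hdvd : ringChar F ∣ 2 ^ n := by
      rw [← hF, hcard]
      exact dvd_pow_self _ (by positivity)
    have := hp.dvd_of_dvd_pow (n := n) (by simpa using hdvd)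
    exact (Nat.prime_dvd_prime_iff_eq hp Nat.prime_two).mp this
  haveI hF2 : CharP F 2 := hchar2 ▸ ringChar.charP F
  haveI : Fact (Nat.Prime 2) := ⟨Nat.prime_two⟩
  haveI : CharP (MvPolynomial (Fin 2) F) 2 :=
    charP_of_injective_algebraMap (MvPolynomial.C_injective (Fin 2) F) 2
  set f' := Polynomial.derivative f with hf'
  -- square root g of f'
  have hd2 : Polynomial.derivative f' = 0 := deriv2_eq_zero f
  set g : Polynomial F := (Polynomial.contract 2 f').map
      ((frobeniusEquiv F 2).symm : F ≃+* F) with hg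
  have hgsq : g ^ 2 = f' := by
    have h1 : Polynomial.map (frobenius F 2) (Polynomial.expand F 2 g) = g ^ 2 :=
      Polynomial.map_frobenius_expand 2 g
    rw [← h1, Polynomial.map_expand]
    have : Polynomial.map (frobenius F 2) g = Polynomial.contract 2 f' := by
      rw [hg, Polynomial.map_map]
      refine (congrArg (Polynomial.map · _) ?_).trans Polynomial.map_id
      ext a
      simp only [RingHom.comp_apply, RingHom.coe_coe, RingHom.id_apply]
      exact (frobeniusEquiv F 2).apply_symm_apply a
    rw [this]
    exact Polynomial.expand_contract 2 hd2 (by norm_num)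
  -- differentiate the identity with respect to z and substitute z = y
  have h1 := congrArg (aeval (substYY F) ∘ (pderiv (2 : Fin 3))) hφ
  simp only [Function.comp_apply] at h1
  rw [Derivation.leibniz] at h1
  have key : (X 0 + X 1 : MvPolynomial (Fin 2) F) ^ 2 * aeval (substYY F) φ =
      Polynomial.aeval (X 1 : MvPolynomial (Fin 2) F) f' +
        Polynomial.aeval (X 0 : MvPolynomial (Fin 2) F) f' := by
    have he3 : aeval (substYY F) (e3 F) = 0 := by
      simp [e3, substYY, CharTwo.add_self_eq_zero]
    have hde3 : aeval (substYY F) (pderiv (2 : Fin 3) (e3 F)) =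
        (X 0 + X 1 : MvPolynomial (Fin 2) F) ^ 2 := by
      simp only [e3, pderiv_mul, map_add, map_mul, pderiv_X, pderiv_X_self,
        pderiv_X_of_ne, Pi.single_eq_of_ne]
      simp [substYY, CharTwo.add_self_eq_zero]
      ring
    have hdfsum : aeval (substYY F) (pderiv (2 : Fin 3) (fsum f)) =
        Polynomial.aeval (X 1 : MvPolynomial (Fin 2) F) f' +
          Polynomial.aeval (X 0 : MvPolynomial (Fin 2) F) f' := by
      have p0 : pderiv (2 : Fin 3) (X 0 : MvPolynomial (Fin 3) F) = 0 := by simp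
      have p1 : pderiv (2 : Fin 3) (X 1 : MvPolynomial (Fin 3) F) = 0 := by simp
      have p2 : pderiv (2 : Fin 3) (X 2 : MvPolynomial (Fin 3) F) = 1 := by simp
      simp only [fsum, map_add, Derivation.map_aeval, smul_eq_mul, p0, p1, p2,
        mul_zero, mul_one, zero_add, add_zero, map_zero]
      have hcomp : ∀ x : MvPolynomial (Fin 3) F,
          aeval (substYY F) (Polynomial.aeval x (Polynomial.derivative f)) =
            Polynomial.aeval (aeval (substYY F) x) (Polynomial.derivative f) := fun x =>
        (Polynomial.aeval_algHom_apply (R := F) (aeval (substYY F)) x (Polynomial.derivative f)).symm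
      rw [hcomp, hcomp]
      have hx2 : aeval (R := F) (substYY F) (X (2 : Fin 3)) = (X 1 : MvPolynomial (Fin 2) F) := by
        simp [substYY]
      have hxs : aeval (R := F) (substYY F) (X 0 + X 1 + X 2 : MvPolynomial (Fin 3) F)
          = (X 0 : MvPolynomial (Fin 2) F) := by
        simp only [map_add, aeval_X, substYY]
        show (X 0 + X 1 + X 1 : MvPolynomial (Fin 2) F) = X 0
        rw [add_assoc, CharTwo.add_self_eq_zero, add_zero]
      rw [hx2, hxs, ← hf']
    rw [smul_eq_mul, smul_eq_mul, map_add, map_mul, map_mul, he3, hde3, hdfsum,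
      zero_mul, zero_add, mul_comm] at h1
    exact h1
  -- express RHS as a square divisible by (X0+X1)^2
  obtain ⟨h, hh⟩ := Polynomial.sub_dvd_eval_sub (X (0 : Fin 2) : MvPolynomial (Fin 2) F)
    (X 1) (g.map (algebraMap F (MvPolynomial (Fin 2) F)))
  have haev : ∀ i : Fin 2, Polynomial.eval (X i : MvPolynomial (Fin 2) F)
      (g.map (algebraMap F (MvPolynomial (Fin 2) F))) = Polynomial.aeval (X i) g := by
    intro i; rw [Polynomial.eval_map, Polynomial.aeval_def]
  rw [haev, haev, CharTwo.sub_eq_add, CharTwo.sub_eq_add] at hh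
  have hrhs : Polynomial.aeval (X 1 : MvPolynomial (Fin 2) F) f' +
      Polynomial.aeval (X 0 : MvPolynomial (Fin 2) F) f'
      = (X 0 + X 1 : MvPolynomial (Fin 2) F) ^ 2 * h ^ 2 := by
    rw [← hgsq, map_pow, map_pow, ← CharTwo.add_sq, add_comm, hh, mul_pow]
  refine ⟨h, ?_⟩
  have hx01 : (X 0 + X 1 : MvPolynomial (Fin 2) F) ^ 2 ≠ 0 := by
    apply pow_ne_zero
    intro hzero
    have := congrArg (coeff (Finsupp.single 0 1)) hzero
    simp [coeff_X', Finsupp.single_eq_single_iff] at this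
  exact mul_left_cancel₀ hx01 (by rw [key, hrhs])
end

section
/- Let k ≥ 1 and set d = 2^k+1. In the polynomial ring F_{2^k}[x,y,z] one has the identity x^d + y^d + z^d + (x+y+z)^d = (x+y)(x+z)(y+z) · ∏_{α ∈ F_{2^k} \ F_2} (x + αy + (α+1)z); equivalently, φ_d = ∏_{α ∈ F_{2^k} \ F_2} (x + αy + (α+1)z). -/
open Polynomial in
lemma prod_X_sub_C_univ (F : Type*) [Field F] [Fintype F] [DecidableEq F] :
    ∏ a : F, (X - C a) = X ^ (Fintype.card F) - X := by
  have h1 : 1 < Fintype.card F := Fintype.one_lt_card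
  obtain ⟨n, hn⟩ : ∃ n, Fintype.card F = n + 1 + 1 := ⟨Fintype.card F - 2, by omega⟩
  have hm : (X ^ (Fintype.card F) - X : F[X]).Monic := by
    rw [hn]
    apply monic_X_pow_sub
    rw [degree_X]
    exact_mod_cast Nat.succ_lt_succ (Nat.succ_pos n)
  have hr := FiniteField.roots_X_pow_card_sub_X F
  have hd : (X ^ (Fintype.card F) - X : F[X]).natDegree = Fintype.card F :=
    FiniteField.X_pow_card_sub_X_natDegree_eq F h1
  have := prod_multiset_X_sub_C_of_monic_of_roots_card_eq hm
    (by rw [hr, hd]; simp [Finset.card_univ])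
  rw [hr] at this
  rw [← this]
  rfl

lemma prod_add_ringHom {F K : Type*} [Field F] [Fintype F] [DecidableEq F]
    [Field K] [CharP K 2] (g : F →+* K) (c : K) :
    ∏ a : F, (c + g a) = c ^ (Fintype.card F) + c := by
  have h := congrArg (Polynomial.eval₂RingHom g c) (prod_X_sub_C_univ F)
  simp only [map_prod, map_sub, map_pow, Polynomial.coe_eval₂RingHom,
    Polynomial.eval₂_X, Polynomial.eval₂_C] at h
  rw [CharTwo.sub_eq_add] at h
  calc ∏ a : F, (c + g a) = ∏ a : F, (c - g a) := by
        apply Finset.prod_congr rfl; intro a _; rw [CharTwo.sub_eq_add]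
    _ = c ^ Fintype.card F + c := h

lemma key_field {F K : Type*} [Field F] [Fintype F] [DecidableEq F]
    [Field K] [CharP K 2] (g : F →+* K) (W V : K) (hV : V ≠ 0) :
    V * ∏ a : F, (W + g a * V) = W ^ (Fintype.card F) * V + W * V ^ (Fintype.card F) := by
  have h1 : ∀ a : F, W + g a * V = V * (W / V + g a) := by
    intro a; field_simp
  calc V * ∏ a : F, (W + g a * V)
      = V * ∏ a : F, (V * (W / V + g a)) := by
        rw [Finset.prod_congr rfl (fun a _ => h1 a)]
    _ = V * ((∏ _a : F, V) * ∏ a : F, (W / V + g a)) := by rw [Finset.prod_mul_distrib]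
    _ = V * (V ^ (Fintype.card F) * ((W / V) ^ (Fintype.card F) + W / V)) := by
        rw [Finset.prod_const, Finset.card_univ, prod_add_ringHom]
    _ = W ^ (Fintype.card F) * V + W * V ^ (Fintype.card F) := by
        have hVn : V ^ Fintype.card F ≠ 0 := pow_ne_zero _ hV
        have e1 := mul_inv_cancel₀ hVn
        have e2 := mul_inv_cancel₀ hV
        rw [div_pow, div_eq_mul_inv, div_eq_mul_inv]
        linear_combination (V * W ^ Fintype.card F) * e1 + (V ^ Fintype.card F * W) * e2

open MvPolynomial

/-- The polynomial `x^j + y^j + z^j + (x+y+z)^j` in `F[x,y,z]`. -/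
noncomputable def powSum (F : Type*) [CommRing F] (j : ℕ) : MvPolynomial (Fin 3) F :=
  X 0 ^ j + X 1 ^ j + X 2 ^ j + (X 0 + X 1 + X 2) ^ j

theorem gold_factorization
    (k : ℕ) (hk : 1 ≤ k) (F : Type*) [Field F] [Fintype F] [DecidableEq F]
    (hF : Fintype.card F = 2 ^ k) :
    powSum F (2 ^ k + 1) =
      e3 F * ∏ α ∈ Finset.univ.filter (fun α : F => α ≠ 0 ∧ α ≠ 1),
        (X 0 + C α * X 1 + C (α + 1) * X 2) := by
  classical
  -- characteristic 2
  haveI hF2 : CharP F 2 := by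
    haveI hcp := ringChar.charP F
    obtain ⟨n, hp, hc⟩ := FiniteField.card F (ringChar F)
    have hdvd : ringChar F ∣ 2 ^ k := by
      rw [← hF, hc]; exact dvd_pow_self _ (by exact_mod_cast n.ne_zero)
    have h2 : ringChar F = 2 :=
      (Nat.prime_dvd_prime_iff_eq hp Nat.prime_two).mp (hp.dvd_of_dvd_pow hdvd)
    rwa [h2] at hcp
  set A := MvPolynomial (Fin 3) F
  haveI : CharP A 2 := inferInstance
  set q : ℕ := 2 ^ k with hq
  set w : A := X 0 + X 2 with hw
  set v : A := X 1 + X 2 with hv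
  set f : F → A := fun a => X 0 + C a * X 1 + C (a + 1) * X 2 with hf
  -- factor form
  have hfa : ∀ a : F, f a = w + C a * v := by
    intro a
    simp only [hf, hw, hv, map_add, map_one]
    ring
  -- the product over all of F
  have hv0 : v ≠ 0 := by
    intro h
    have := congrArg (eval (fun i : Fin 3 => if i = 1 then (1 : F) else 0)) h
    simp [hv] at this
  have hkey : v * ∏ a : F, f a = w ^ q * v + w * v ^ q := by
    set K := FractionRing A
    haveI : CharP K 2 :=
      charP_of_injective_ringHom (IsFractionRing.injective A K) 2
    apply IsFractionRing.injective A K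
    have hiv : algebraMap A K v ≠ 0 := fun h => hv0 (IsFractionRing.injective A K (by simpa using h))
    have := key_field ((algebraMap A K).comp (C : F →+* A))
      (algebraMap A K w) (algebraMap A K v) hiv
    rw [hF] at this
    simp only [map_mul, map_prod, map_add, map_pow]
    rw [Finset.prod_congr rfl (fun a _ => congrArg (algebraMap A K) (hfa a))]
    simpa using this
  -- splitting off α = 0 and α = 1
  have hfilter : Finset.univ.filter (fun a : F => a = 0 ∨ a = 1) = {0, 1} := by
    ext a; simp
  have hsplit : (∏ a : F, f a) =
      (f 0 * f 1) * ∏ α ∈ Finset.univ.filter (fun α : F => α ≠ 0 ∧ α ≠ 1), f α := by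
    rw [← Finset.prod_filter_mul_prod_filter_not Finset.univ (fun a : F => a = 0 ∨ a = 1) f,
      hfilter, Finset.prod_pair (zero_ne_one)]
    congr 1
    apply Finset.prod_congr _ (fun _ _ => rfl)
    ext a; simp [not_or]
  have hf0 : f 0 = w := by simp [hf, hw]
  have hf1 : f 1 = X 0 + X 1 := by
    have h11 : (1 : F) + 1 = 0 := CharTwo.add_self_eq_zero 1
    show X 0 + C 1 * X 1 + C ((1:F)+1) * X 2 = X 0 + X 1
    rw [h11, map_zero, zero_mul, add_zero, map_one, one_mul]
  -- Frobenius
  have hadd : ∀ s t : A, (s + t) ^ q = s ^ q + t ^ q := fun s t => add_pow_char_pow s t 2 k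
  have h2 : (2 : A) = 0 := by exact_mod_cast CharP.cast_eq_zero A 2
  have hpow : powSum F (2 ^ k + 1) = w ^ q * v + w * v ^ q := by
    rw [powSum, ← hq]
    rw [show ((X 0 + X 1 + X 2 : A)) ^ (q + 1) = ((X 0 + X 1 + X 2 : A)) ^ q * (X 0 + X 1 + X 2) from pow_succ _ _,
      hadd (X 0 + X 1) (X 2), hadd (X 0) (X 1), hw, hv, hadd (X 0) (X 2), hadd (X 1) (X 2)]
    linear_combination (X 0 ^ q * X 0 + X 1 ^ q * X 1 : A) * h2
  calc powSum F (2 ^ k + 1) = w ^ q * v + w * v ^ q := hpow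
    _ = v * ∏ a : F, f a := hkey.symm
    _ = v * ((f 0 * f 1) * ∏ α ∈ Finset.univ.filter (fun α : F => α ≠ 0 ∧ α ≠ 1), f α) := by
        rw [hsplit]
    _ = e3 F * ∏ α ∈ Finset.univ.filter (fun α : F => α ≠ 0 ∧ α ≠ 1),
        (X 0 + C α * X 1 + C (α + 1) * X 2) := by
        rw [hf0, hf1, e3, hw, hv]
        ring
end

section
/- Let d be an odd integer with d ≥ 5 that is neither a Gold number nor a Kasami–Welch number. Then φ_d is squarefree over an algebraic closure of F_2, i.e., φ_d has no repeated irreducible factor in F̄_2[x,y,z]. -/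
open MvPolynomial

section Aux

variable {K : Type*} [Field K]

/-- If `r^2` divides `f` then `r` divides every partial derivative of `f`. -/
lemma dvd_pderiv_of_sq_dvd {σ : Type*} {r f : MvPolynomial σ K} (i : σ)
    (h : r * r ∣ f) : r ∣ pderiv i f := by
  obtain ⟨q, rfl⟩ := h
  rw [pderiv_mul, pderiv_mul]
  exact dvd_add (dvd_mul_of_dvd_left
    (dvd_add (dvd_mul_left r _) (dvd_mul_right r _)) q)
    (dvd_mul_of_dvd_left (dvd_mul_right r r) _)

/-- A common divisor of `x^n + y^n` and `y^n + z^n` (with `n ≠ 0`) is a unit. -/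
lemma isUnit_of_dvd_two_binomials {n : ℕ} (hn : n ≠ 0) (r : MvPolynomial (Fin 3) K)
    (h1 : r ∣ X 0 ^ n + X 1 ^ n) (h2 : r ∣ X 1 ^ n + X 2 ^ n) : IsUnit r := by
  set e := finSuccEquiv K 2 with he
  have hX1 : (X 1 : MvPolynomial (Fin 3) K) = X (Fin.succ 0) := rfl
  have hX2 : (X 2 : MvPolynomial (Fin 3) K) = X (Fin.succ 1) := rfl
  have hA := map_dvd e h1
  have hB := map_dvd e h2
  rw [hX1, map_add, map_pow, map_pow, finSuccEquiv_X_zero, finSuccEquiv_X_succ,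
    ← Polynomial.C_pow] at hA
  rw [hX1, hX2, map_add, map_pow, map_pow, finSuccEquiv_X_succ, finSuccEquiv_X_succ,
    ← Polynomial.C_pow, ← Polynomial.C_pow, ← Polynomial.C_add] at hB
  have hc : (X 0 ^ n + X 1 ^ n : MvPolynomial (Fin 2) K) ≠ 0 := by
    intro h
    have h' := congrArg (eval fun i : Fin 2 => if i = 0 then (1 : K) else 0) h
    simp [hn] at h'
  have hdeg : (e r).natDegree = 0 := by
    have h' := Polynomial.natDegree_le_of_dvd hB (Polynomial.C_ne_zero.mpr hc)
    rw [Polynomial.natDegree_C] at h'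
    omega
  have hc0 : e r = Polynomial.C ((e r).coeff 0) :=
    Polynomial.eq_C_of_natDegree_eq_zero hdeg
  rw [hc0] at hA
  obtain ⟨q, hq⟩ := hA
  have hcoeff : (1 : MvPolynomial (Fin 2) K) = (e r).coeff 0 * q.coeff n := by
    have h' := congrArg (fun p => Polynomial.coeff p n) hq
    simp only [Polynomial.coeff_add, Polynomial.coeff_X_pow, eq_self_iff_true, if_true,
      Polynomial.coeff_C, if_neg hn, add_zero, Polynomial.coeff_C_mul] at h'
    exact h'
  have hu : IsUnit ((e r).coeff 0) := IsUnit.of_mul_eq_one _ hcoeff.symm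
  have hue : IsUnit (e r) := hc0 ▸ hu.map (Polynomial.C : _ →+* _)
  have := hue.map e.symm
  rwa [he, AlgEquiv.symm_apply_apply] at this

end Aux

theorem phi_odd_not_gold_not_kasami_squarefree
    (d : ℕ) (hd : 5 ≤ d) (hodd : Odd d)
    (hGold : ¬ ∃ k : ℕ, 1 ≤ k ∧ d = 2 ^ k + 1)
    (hKW : ¬ ∃ k : ℕ, 2 ≤ k ∧ d = 2 ^ (2 * k) - 2 ^ k + 1)
    (φd : MvPolynomial (Fin 3) (ZMod 2))
    (hφd : e3 (ZMod 2) * φd = powSum (ZMod 2) d) :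
    Squarefree (MvPolynomial.map
      (algebraMap (ZMod 2) (AlgebraicClosure (ZMod 2))) φd) := by
  set K := AlgebraicClosure (ZMod 2) with hK
  set f := algebraMap (ZMod 2) K with hf
  intro r hr
  -- characteristic 2 facts
  have hchar : (2 : MvPolynomial (Fin 3) K) = 0 := by
    have h2 : ((2 : ℕ) : MvPolynomial (Fin 3) K) = 0 := CharP.cast_eq_zero _ 2
    simpa using h2
  obtain ⟨m, hm⟩ := hodd
  have hdcast : ((d : ℕ) : MvPolynomial (Fin 3) K) = 1 := by
    rw [hm]
    push_cast
    linear_combination (m : MvPolynomial (Fin 3) K) * hchar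
  -- r^2 divides the mapped power sum
  have hmap : MvPolynomial.map f (powSum (ZMod 2) d) = powSum K d := by
    simp [powSum]
  have hdvdP : MvPolynomial.map f φd ∣ powSum K d :=
    ⟨MvPolynomial.map f (e3 (ZMod 2)), by rw [← hmap, ← hφd, map_mul, mul_comm]⟩
  have hsq : r * r ∣ powSum K d := dvd_trans hr hdvdP
  have hpd : ∀ i, r ∣ pderiv i (powSum K d) := fun i => dvd_pderiv_of_sq_dvd i hsq
  -- compute sums of partial derivatives
  have hp01 : pderiv 0 (powSum K d) + pderiv 1 (powSum K d)
      = X 0 ^ (d - 1) + X 1 ^ (d - 1) := by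
    simp only [powSum, map_add, pderiv_pow, pderiv_X_self,
      pderiv_X_of_ne (show (1 : Fin 3) ≠ 0 by decide),
      pderiv_X_of_ne (show (2 : Fin 3) ≠ 0 by decide),
      pderiv_X_of_ne (show (0 : Fin 3) ≠ 1 by decide),
      pderiv_X_of_ne (show (2 : Fin 3) ≠ 1 by decide)]
    linear_combination (X 0 ^ (d - 1) + X 1 ^ (d - 1) : MvPolynomial (Fin 3) K) * hdcast
      + ((d : MvPolynomial (Fin 3) K) * (X 0 + X 1 + X 2) ^ (d - 1)) * hchar
  have hp12 : pderiv 1 (powSum K d) + pderiv 2 (powSum K d)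
      = X 1 ^ (d - 1) + X 2 ^ (d - 1) := by
    simp only [powSum, map_add, pderiv_pow, pderiv_X_self,
      pderiv_X_of_ne (show (0 : Fin 3) ≠ 1 by decide),
      pderiv_X_of_ne (show (2 : Fin 3) ≠ 1 by decide),
      pderiv_X_of_ne (show (0 : Fin 3) ≠ 2 by decide),
      pderiv_X_of_ne (show (1 : Fin 3) ≠ 2 by decide)]
    linear_combination (X 1 ^ (d - 1) + X 2 ^ (d - 1) : MvPolynomial (Fin 3) K) * hdcast
      + ((d : MvPolynomial (Fin 3) K) * (X 0 + X 1 + X 2) ^ (d - 1)) * hchar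
  have h1 : r ∣ X 0 ^ (d - 1) + X 1 ^ (d - 1) := hp01 ▸ dvd_add (hpd 0) (hpd 1)
  have h2 : r ∣ X 1 ^ (d - 1) + X 2 ^ (d - 1) := hp12 ▸ dvd_add (hpd 1) (hpd 2)
  exact isUnit_of_dvd_two_binomials (by omega) r h1 h2
end

section
/- Let q be a power of 2 and let f ∈ F_q[x] be any polynomial. Then (x+y)(x+z)(y+z) divides f(x)+f(y)+f(z)+f(x+y+z) in the polynomial ring F_q[x,y,z]. -/
open MvPolynomial

section Aux

variable {F : Type*} [CommRing F]

/-- The composition of `finSuccEquiv` with evaluation at `X 0` is the substitution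
`X 0 ↦ X 0, X 1 ↦ X 0, X 2 ↦ X 1`. -/
lemma eval_finSuccEquiv (g : MvPolynomial (Fin 3) F) :
    Polynomial.eval (X 0 : MvPolynomial (Fin 2) F) (finSuccEquiv F 2 g) =
      aeval ![X 0, X 0, X 1] g := by
  have h : (Polynomial.evalRingHom (X 0 : MvPolynomial (Fin 2) F)).comp
      ((finSuccEquiv F 2 : MvPolynomial (Fin 3) F ≃+* Polynomial (MvPolynomial (Fin 2) F)) :
        MvPolynomial (Fin 3) F →+* Polynomial (MvPolynomial (Fin 2) F)) =
      (aeval (R := F) ![X 0, X 0, X 1]).toRingHom := by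
    apply MvPolynomial.ringHom_ext
    · intro a
      simp [finSuccEquiv_apply, algebraMap_eq]
    · intro i
      refine Fin.cases ?_ (fun j => ?_) i
      · simp [finSuccEquiv_X_zero]
      · rw [RingHom.comp_apply]
        show Polynomial.eval _ (finSuccEquiv F 2 (X j.succ)) = _
        rw [finSuccEquiv_X_succ]
        fin_cases j <;> simp
  exact congrArg (· g) h

/-- If `g` vanishes under the substitution `X 0 ↦ X 0, X 1 ↦ X 0, X 2 ↦ X 1`,
then `X 0 - X 1` divides `g`. -/
lemma x_sub_y_dvd (g : MvPolynomial (Fin 3) F)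
    (h : aeval ![X 0, X 0, X 1] g = (0 : MvPolynomial (Fin 2) F)) :
    (X 0 - X 1 : MvPolynomial (Fin 3) F) ∣ g := by
  set e := finSuccEquiv F 2 with he
  have hd : (Polynomial.X - Polynomial.C (X 0 : MvPolynomial (Fin 2) F)) ∣ e g := by
    rw [Polynomial.dvd_iff_isRoot, Polynomial.IsRoot, eval_finSuccEquiv, h]
  have hfac : e (X 0 - X 1 : MvPolynomial (Fin 3) F) =
      Polynomial.X - Polynomial.C (X 0 : MvPolynomial (Fin 2) F) := by
    have h1 : ((1 : Fin 3)) = Fin.succ 0 := rfl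
    rw [map_sub, he, finSuccEquiv_X_zero, h1, finSuccEquiv_X_succ]
  obtain ⟨c, hc⟩ := hd
  exact ⟨e.symm c, by
    have := congrArg e.symm hc
    rwa [AlgEquiv.symm_apply_apply, ← hfac, map_mul, AlgEquiv.symm_apply_apply] at this⟩

lemma not_dvd_of_point (s : Fin 3 → F) (p q : MvPolynomial (Fin 3) F)
    (hp : aeval s p = 0) (hq : aeval s q ≠ 0) : ¬ p ∣ q := by
  rintro ⟨c, rfl⟩
  exact hq (by rw [map_mul, hp, zero_mul])

end Aux

theorem e3_dvd_fsum
    (n : ℕ) (hn : 0 < n) (F : Type*) [Field F] [Fintype F]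
    (hF : Fintype.card F = 2 ^ n) (f : Polynomial F) :
    e3 F ∣ fsum f := by
  -- characteristic 2
  have h2 : (2 : F) = 0 := by
    have hc : ((Fintype.card F : ℕ) : F) = 0 := Nat.cast_card_eq_zero F
    rw [hF] at hc
    push_cast at hc
    exact pow_eq_zero_iff hn.ne' |>.mp hc
  have two_eq_zero : ∀ {σ : Type} (a : MvPolynomial σ F), a + a = 0 := by
    intro σ a
    rw [← two_mul]
    have : (2 : MvPolynomial σ F) = C (2 : F) := by
      rw [map_ofNat]
    rw [this, h2, map_zero, zero_mul]
  have sub_eq_add : ∀ a b : MvPolynomial (Fin 3) F, a - b = a + b := by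
    intro a b
    rw [sub_eq_iff_eq_add, add_assoc, two_eq_zero b, add_zero]
  -- concrete values of the two swaps we use
  have sA0 : Equiv.swap (1:Fin 3) 2 0 = 0 := by decide
  have sA1 : Equiv.swap (1:Fin 3) 2 1 = 2 := by decide
  have sA2 : Equiv.swap (1:Fin 3) 2 2 = 1 := by decide
  have sB0 : Equiv.swap (0:Fin 3) 1 0 = 1 := by decide
  have sB1 : Equiv.swap (0:Fin 3) 1 1 = 0 := by decide
  have sB2 : Equiv.swap (0:Fin 3) 1 2 = 2 := by decide
  have key : ∀ (τ : Equiv.Perm (Fin 3)) (p : MvPolynomial (Fin 3) F),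
      rename τ (Polynomial.aeval p f) = Polynomial.aeval (rename τ p) f := fun τ p =>
    (Polynomial.aeval_algHom_apply (rename (R := F) τ) p f).symm
  -- fsum is invariant under the two swaps
  have hfsumA : rename (Equiv.swap (1:Fin 3) 2) (fsum f) = fsum f := by
    unfold fsum
    simp only [map_add, key, rename_X, sA0, sA1, sA2]
    ring_nf
  have hfsumB : rename (Equiv.swap (0:Fin 3) 1) (fsum f) = fsum f := by
    unfold fsum
    simp only [map_add, key, rename_X, sB0, sB1, sB2]
    ring_nf
  -- X 0 + X 1 divides fsum f
  have d01 : (X 0 + X 1 : MvPolynomial (Fin 3) F) ∣ fsum f := by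
    rw [← sub_eq_add]
    apply x_sub_y_dvd
    unfold fsum
    have key2 : ∀ p : MvPolynomial (Fin 3) F,
        (aeval ![X 0, X 0, X 1] : MvPolynomial (Fin 3) F →ₐ[F] MvPolynomial (Fin 2) F)
            (Polynomial.aeval p f) =
          Polynomial.aeval
            ((aeval ![X 0, X 0, X 1] : MvPolynomial (Fin 3) F →ₐ[F] MvPolynomial (Fin 2) F) p)
            f := fun p =>
      (Polynomial.aeval_algHom_apply
        (aeval ![X 0, X 0, X 1] : MvPolynomial (Fin 3) F →ₐ[F] MvPolynomial (Fin 2) F) p f).symm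
    simp only [map_add, key2, aeval_X]
    have e0 : (![X 0, X 0, X 1] : Fin 3 → MvPolynomial (Fin 2) F) 0 = X 0 := rfl
    have e1 : (![X 0, X 0, X 1] : Fin 3 → MvPolynomial (Fin 2) F) 1 = X 0 := rfl
    have e2 : (![X 0, X 0, X 1] : Fin 3 → MvPolynomial (Fin 2) F) 2 = X 1 := rfl
    rw [e0, e1, e2, two_eq_zero (X 0 : MvPolynomial (Fin 2) F), zero_add]
    rw [add_assoc, add_comm (Polynomial.aeval (X 0 : MvPolynomial (Fin 2) F) f)]
    rw [add_assoc, two_eq_zero, add_zero, two_eq_zero]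
  have d02 : (X 0 + X 2 : MvPolynomial (Fin 3) F) ∣ fsum f := by
    have := map_dvd (rename (R := F) (Equiv.swap (1:Fin 3) 2)) d01
    rwa [hfsumA, map_add, rename_X, rename_X, sA0, sA1] at this
  have d12 : (X 1 + X 2 : MvPolynomial (Fin 3) F) ∣ fsum f := by
    have := map_dvd (rename (R := F) (Equiv.swap (0:Fin 3) 1)) d02
    rwa [hfsumB, map_add, rename_X, rename_X, sB0, sB2] at this
  -- primality of the linear factors
  have prime01 : Prime (X 0 + X 1 : MvPolynomial (Fin 3) F) := by
    rw [← sub_eq_add]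
    rw [← MulEquiv.prime_iff (finSuccEquiv F 2).toMulEquiv]
    have h1 : ((1 : Fin 3)) = Fin.succ 0 := rfl
    have : (finSuccEquiv F 2).toMulEquiv (X 0 - X 1 : MvPolynomial (Fin 3) F) =
        Polynomial.X - Polynomial.C (X 0 : MvPolynomial (Fin 2) F) := by
      show finSuccEquiv F 2 (X 0 - X 1 : MvPolynomial (Fin 3) F) = _
      rw [map_sub, finSuccEquiv_X_zero, h1, finSuccEquiv_X_succ]
    rw [this]
    exact Polynomial.prime_X_sub_C _
  have prime_rename : ∀ (τ : Equiv.Perm (Fin 3)) (p : MvPolynomial (Fin 3) F),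
      Prime p → Prime (rename τ p) := by
    intro τ p hp
    show Prime ((renameEquiv F τ).toMulEquiv p)
    rwa [MulEquiv.prime_iff (renameEquiv F τ).toMulEquiv]
  have prime02 : Prime (X 0 + X 2 : MvPolynomial (Fin 3) F) := by
    have := prime_rename (Equiv.swap 1 2) _ prime01
    rwa [map_add, rename_X, rename_X, sA0, sA1] at this
  have prime12 : Prime (X 1 + X 2 : MvPolynomial (Fin 3) F) := by
    have := prime_rename (Equiv.swap 0 1) _ prime02
    rwa [map_add, rename_X, rename_X, sB0, sB2] at this
  -- non-divisibilities among the factors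
  have nd1 : ¬ (X 0 + X 2 : MvPolynomial (Fin 3) F) ∣ (X 0 + X 1) := by
    apply not_dvd_of_point (F := F) ![0, 1, 0]
    · simp
    · simp
  have nd2 : ¬ (X 1 + X 2 : MvPolynomial (Fin 3) F) ∣ (X 0 + X 1) := by
    apply not_dvd_of_point (F := F) ![1, 0, 0]
    · simp
    · simp
  have nd3 : ¬ (X 1 + X 2 : MvPolynomial (Fin 3) F) ∣ (X 0 + X 2) := by
    apply not_dvd_of_point (F := F) ![1, 0, 0]
    · simp
    · simp
  -- combine
  obtain ⟨a, ha⟩ := d01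
  have : (X 0 + X 2 : MvPolynomial (Fin 3) F) ∣ (X 0 + X 1) * a := ha ▸ d02
  rcases prime02.2.2 _ _ this with h | h
  · exact absurd h nd1
  obtain ⟨b, hb⟩ := h
  have h12 : (X 1 + X 2 : MvPolynomial (Fin 3) F) ∣ (X 0 + X 1) * ((X 0 + X 2) * b) := by
    rw [← hb, ← ha]; exact d12
  rcases prime12.2.2 _ _ h12 with h | h
  · exact absurd h nd2
  rcases prime12.2.2 _ _ h with h | h
  · exact absurd h nd3
  obtain ⟨c, hc⟩ := h
  exact ⟨c, by rw [e3, ha, hb, hc]; ring⟩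
end

section
/- Let c ∈ F_4 satisfy c^2 + c + 1 = 0, and let L(x) = x^4 + cx. Then for every positive integer n, the map L : F_{4^n} → F_{4^n} is bijective if and only if n is not divisible by 3. -/
lemma nine_dvd_four_pow_sub_one_iff (n : ℕ) : 9 ∣ 4 ^ n - 1 ↔ 3 ∣ n := by
  haveI : Fact (Nat.Prime 3) := ⟨by norm_num⟩
  have h1 : (1:ℕ) ≤ 4 ^ n := Nat.one_le_pow _ _ (by norm_num)
  have hord : orderOf (4 : ZMod 9) = 3 := orderOf_eq_prime (by decide) (by decide)
  rw [← Nat.modEq_iff_dvd' h1, Nat.ModEq.comm, ← ZMod.natCast_eq_natCast_iff]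
  push_cast
  have h := orderOf_dvd_iff_pow_eq_one (x := (4 : ZMod 9)) (n := n)
  rw [hord] at h
  exact h.symm

theorem linearized_bijective_iff_three_not_dvd
    (c : GaloisField 2 2) (hc : c ^ 2 + c + 1 = 0)
    (n : ℕ) (hn : 0 < n)
    (K : Type*) [Field K] [Fintype K] [Algebra (GaloisField 2 2) K]
    (hK : Fintype.card K = 4 ^ n) :
    Function.Bijective
        (fun x : K => x ^ 4 + algebraMap (GaloisField 2 2) K c * x) ↔
      ¬ (3 ∣ n) := by
  have hinj : Function.Injective (algebraMap (GaloisField 2 2) K) :=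
    (algebraMap (GaloisField 2 2) K).injective
  haveI : CharP K 2 := charP_of_injective_algebraMap hinj 2
  set a : K := algebraMap (GaloisField 2 2) K c with ha_def
  -- basic facts about c and a
  have hc3 : c ^ 3 = 1 := by linear_combination (c - 1) * hc
  have hc1 : c ≠ 1 := by
    rintro rfl
    rw [one_pow] at hc
    rw [CharTwo.add_self_eq_zero, zero_add] at hc
    exact one_ne_zero hc
  have hc0 : c ≠ 0 := by
    rintro rfl
    simp at hc3
  have ha3 : a ^ 3 = 1 := by rw [ha_def, ← map_pow, hc3, map_one]
  have ha1 : a ≠ 1 := fun h => hc1 (hinj (by rw [← ha_def, h, map_one]))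
  have ha0 : a ≠ 0 := fun h => hc0 (hinj (by rw [← ha_def, h, map_zero]))
  have hcardU : Nat.card Kˣ = 4 ^ n - 1 := by
    rw [Nat.card_units, Nat.card_eq_fintype_card, hK]
  have hfrob : ∀ x y : K, (x - y) ^ 4 = x ^ 4 - y ^ 4 := by
    intro x y
    have := sub_pow_char_pow (p := 2) (n := 2) (x := x) (y := y)
    norm_num at this
    exact this
  constructor
  · -- bijective → ¬ 3 ∣ n
    intro hbij h3n
    have h9 : 9 ∣ 4 ^ n - 1 := (nine_dvd_four_pow_sub_one_iff n).mpr h3n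
    -- find a cube root of a among units
    obtain ⟨g, hg⟩ := IsCyclic.exists_generator (α := Kˣ)
    have hordg : orderOf g = 4 ^ n - 1 := by
      rw [orderOf_eq_card_of_forall_mem_zpowers hg, hcardU]
    set aU : Kˣ := Units.mk0 a ha0 with haU
    obtain ⟨k, hk⟩ : ∃ k : ℕ, g ^ k = aU := by
      have := mem_powers_iff_mem_zpowers.2 (hg aU)
      obtain ⟨k, hk⟩ := this
      exact ⟨k, hk⟩
    have haU3 : aU ^ 3 = 1 := by
      ext
      simp [haU, ha3]
    have hdvd : (4 ^ n - 1) ∣ 3 * k := by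
      rw [← hordg]
      apply orderOf_dvd_of_pow_eq_one
      rw [mul_comm, pow_mul, hk, haU3]
    obtain ⟨t, ht⟩ := h9
    obtain ⟨s, hs⟩ := hdvd
    rw [ht] at hs
    -- 3*k = (9*t)*s, so k = 3*(t*s)
    have hk3 : k = 3 * (t * s) := by
      have h33 : 3 * k = 3 * (3 * (t * s)) := by rw [hs]; ring
      exact Nat.eq_of_mul_eq_mul_left (by norm_num) h33
    set w : Kˣ := g ^ (t * s) with hw
    have hw3 : w ^ 3 = aU := by
      rw [hw, ← pow_mul, show t * s * 3 = k by rw [hk3]; ring, hk]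
    -- z := w is a nonzero kernel element
    set z : K := Units.val w with hz
    have hzne : z ≠ 0 := w.ne_zero
    have hz3 : z ^ 3 = a := by
      have := congrArg Units.val hw3
      simpa [hz, haU] using this
    have hLz : z ^ 4 + a * z = 0 := by
      have : z ^ 4 = a * z := by
        calc z ^ 4 = z ^ 3 * z := by ring
        _ = a * z := by rw [hz3]
      rw [this, CharTwo.add_self_eq_zero]
    have : z = (0 : K) := by
      apply hbij.injective
      show z ^ 4 + a * z = (0:K) ^ 4 + a * 0
      rw [hLz]; ring
    exact hzne this
  · -- ¬ 3 ∣ n → bijective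
    intro h3n
    rw [← Finite.injective_iff_bijective]
    intro x y hxy
    simp only at hxy
    have hker : (x - y) ^ 4 + a * (x - y) = 0 := by
      have h4 := hfrob x y
      linear_combination h4 + hxy
    by_contra hne
    have hzne : x - y ≠ 0 := sub_ne_zero.2 hne
    have hz3 : (x - y) ^ 3 = a := by
      have hfac : (x - y) * ((x - y) ^ 3 + a) = 0 := by linear_combination hker
      rcases mul_eq_zero.1 hfac with h | h
      · exact absurd h hzne
      · have h' : (x - y) ^ 3 = -a := eq_neg_of_add_eq_zero_left h
        rwa [CharTwo.neg_eq] at h'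
    -- now (x-y) has order 9 as a unit, so 9 ∣ 4^n - 1, so 3 ∣ n
    set u : Kˣ := Units.mk0 (x - y) hzne with hu
    have hu3 : u ^ 3 ≠ 1 := by
      intro h
      have := congrArg Units.val h
      simp only [Units.val_pow_eq_pow_val, hu, Units.val_mk0, Units.val_one] at this
      rw [hz3] at this
      exact ha1 this
    have hu9 : u ^ 9 = 1 := by
      ext
      simp only [Units.val_pow_eq_pow_val, hu, Units.val_mk0, Units.val_one]
      calc (x - y) ^ 9 = ((x - y) ^ 3) ^ 3 := by ring
        _ = 1 := by rw [hz3, ha3]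
    have hdvd : orderOf u ∣ 9 := orderOf_dvd_of_pow_eq_one hu9
    have h3p : Nat.Prime 3 := by norm_num
    rw [show (9:ℕ) = 3 ^ 2 by norm_num] at hdvd
    obtain ⟨j, hj2, hje⟩ := (Nat.dvd_prime_pow h3p).1 hdvd
    interval_cases j
    · rw [pow_zero, orderOf_eq_one_iff] at hje
      exact hu3 (by rw [hje, one_pow])
    · rw [pow_one] at hje
      exact hu3 (hje ▸ pow_orderOf_eq_one u)
    · have h9card : 9 ∣ Nat.card Kˣ := by
        have h := orderOf_dvd_natCard u
        rw [hje] at h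
        simpa using h
      rw [hcardU] at h9card
      exact h3n ((nine_dvd_four_pow_sub_one_iff n).1 h9card)
end

section
/- Let c ∈ F_4 satisfy c^2 + c + 1 = 0. Then for every positive integer n not divisible by 3, the function x ↦ x^{12} + c x^3 is APN on F_{4^n}. -/
/-- A function `f` on a finite field `L` is almost perfect nonlinear (APN) if for every
`a ≠ 0` and every `b`, the equation `f (x + a) + f x = b` has at most 2 solutions. -/
def IsAPN {L : Type*} [Field L] (f : L → L) : Prop :=
  ∀ a : L, a ≠ 0 → ∀ b : L, Set.ncard {x : L | f (x + a) + f x = b} ≤ 2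

theorem x12_plus_cx3_is_APN
    (c : GaloisField 2 2) (hc : c ^ 2 + c + 1 = 0)
    (n : ℕ) (hn : 0 < n) (h3 : ¬ (3 ∣ n))
    (K : Type*) [Field K] [Fintype K] [Algebra (GaloisField 2 2) K]
    (hK : Fintype.card K = 4 ^ n) :
    IsAPN (fun x : K => x ^ 12 + algebraMap (GaloisField 2 2) K c * x ^ 3) := by
  have hchar : CharP K 2 :=
    charP_of_injective_ringHom (algebraMap (GaloisField 2 2) K).injective 2
  have h2K : (2 : K) = 0 := by exact_mod_cast CharP.cast_eq_zero K 2
  set c' : K := algebraMap (GaloisField 2 2) K c with hc'def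
  -- c ≠ 1
  have hc1 : c ≠ 1 := by
    intro h
    rw [h] at hc
    norm_num at hc
    have := (CharP.cast_eq_zero_iff (GaloisField 2 2) 2 3).mp hc
    norm_num at this
  have hc3 : c ^ 3 = 1 := by linear_combination (c - 1) * hc
  have hc'3 : c' ^ 3 = 1 := by
    rw [hc'def, ← map_pow, hc3, map_one]
  -- frobenius facts
  have hfour : ∀ y z : K, (y + z) ^ 4 = y ^ 4 + z ^ 4 := by
    intro y z
    linear_combination (2*y^3*z + 3*y^2*z^2 + 2*y*z^3) * h2K
  -- number theory
  have hq1 : 1 ≤ 4 ^ n := Nat.one_le_pow _ _ (by norm_num)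
  have h3dvd : 3 ∣ 4 ^ n - 1 := by
    have : ((4 ^ n - 1 : ℕ) : ZMod 3) = 0 := by
      push_cast [Nat.cast_sub hq1]
      rw [show (4 : ZMod 3) = 1 by decide, one_pow]
      ring
    exact (ZMod.natCast_eq_zero_iff _ _).mp this
  have h9ndvd : ¬ (9 ∣ 4 ^ n - 1) := by
    intro h9
    have h0 : ((4 ^ n - 1 : ℕ) : ZMod 9) = 0 := (ZMod.natCast_eq_zero_iff _ _).mpr h9
    rw [Nat.cast_sub hq1] at h0
    push_cast at h0
    have h1 : (4 : ZMod 9) ^ n = 1 := by linear_combination h0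
    have hmod : (4 : ZMod 9) ^ n = (4 : ZMod 9) ^ (n % 3) := by
      conv_lhs => rw [← Nat.div_add_mod n 3]
      rw [pow_add, pow_mul, show (4 : ZMod 9) ^ 3 = 1 by decide, one_pow, one_mul]
    have hr : n % 3 = 1 ∨ n % 3 = 2 := by omega
    rw [hmod] at h1
    rcases hr with hr | hr <;> rw [hr] at h1 <;> revert h1 <;> decide
  -- injectivity of L y = y^4 + c'*y
  have hm3 : ¬ (3 ∣ (4 ^ n - 1) / 3) := by
    intro ⟨k, hk⟩
    exact h9ndvd ⟨k, by omega⟩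
  have h3m : 3 * ((4 ^ n - 1) / 3) = 4 ^ n - 1 := Nat.mul_div_cancel' h3dvd
  have Linj : ∀ y z : K, y ^ 4 + c' * y = z ^ 4 + c' * z → y = z := by
    intro y z h
    set w : K := y - z with hw
    have hw4 : w ^ 4 + c' * w = 0 := by
      rw [hw]
      linear_combination h + (z^4 - 2*y^3*z + 3*y^2*z^2 - 2*y*z^3) * h2K
    have hfac : w * (w ^ 3 + c') = 0 := by linear_combination hw4
    rcases mul_eq_zero.mp hfac with h0 | h0
    · rw [hw] at h0; exact sub_eq_zero.mp h0
    · exfalso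
      have hw3 : w ^ 3 = c' := by linear_combination h0 - c' * h2K
      have hc'0 : c' ≠ 0 := by
        intro hc0
        have : c = 0 := (algebraMap (GaloisField 2 2) K).injective (by rw [← hc'def, hc0, map_zero])
        rw [this] at hc
        norm_num at hc
      have hw0 : w ≠ 0 := by
        intro h; rw [h] at hw3; exact hc'0 (by rw [← hw3]; ring)
      have hw9 : (w ^ 3) ^ 3 = 1 := by rw [hw3]; exact hc'3
      have hwq : w ^ (4 ^ n - 1) = 1 := by
        have := FiniteField.pow_card_sub_one_eq_one w hw0
        rwa [hK] at this
      have hwm : (w ^ 3) ^ ((4 ^ n - 1) / 3) = 1 := by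
        rw [← pow_mul, h3m, hwq]
      have hd1 : orderOf (w ^ 3) ∣ 3 := orderOf_dvd_of_pow_eq_one hw9
      have hd2 : orderOf (w ^ 3) ∣ (4 ^ n - 1) / 3 := orderOf_dvd_of_pow_eq_one hwm
      have hcop : Nat.Coprime 3 ((4 ^ n - 1) / 3) :=
        (Nat.Prime.coprime_iff_not_dvd (by norm_num)).mpr hm3
      have hone : orderOf (w ^ 3) = 1 :=
        Nat.eq_one_of_dvd_coprimes hcop hd1 hd2
      have hw31 : w ^ 3 = 1 := orderOf_eq_one_iff.mp hone
      have : c' = 1 := by rw [← hw3, hw31]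
      exact hc1 ((algebraMap (GaloisField 2 2) K).injective (by rw [← hc'def, this, map_one]))
  -- main argument
  intro a ha b
  set u : K → K := fun x => a * x ^ 2 + a ^ 2 * x + a ^ 3 with hu
  have hcube : ∀ x : K, (x + a) ^ 3 = x ^ 3 + u x := by
    intro x
    simp only [hu]
    linear_combination (a * x ^ 2 + a ^ 2 * x) * h2K
  have key : ∀ x : K, ((x + a) ^ 12 + c' * (x + a) ^ 3) + (x ^ 12 + c' * x ^ 3)
      = (u x) ^ 4 + c' * (u x) := by
    intro x
    rw [show (x + a) ^ 12 = ((x + a) ^ 3) ^ 4 by ring, hcube x, hfour]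
    linear_combination (x ^ 12 + c' * x ^ 3) * h2K
  have hset : {x : K | (x + a) ^ 12 + c' * (x + a) ^ 3 + (x ^ 12 + c' * x ^ 3) = b}
      = {x : K | (u x) ^ 4 + c' * (u x) = b} := by
    ext x
    simp only [Set.mem_setOf_eq, key x]
  show Set.ncard {x : K | (x + a) ^ 12 + c' * (x + a) ^ 3 + (x ^ 12 + c' * x ^ 3) = b} ≤ 2
  rw [hset]
  set S := {x : K | (u x) ^ 4 + c' * (u x) = b} with hS
  rcases Set.eq_empty_or_nonempty S with hE | ⟨x₀, hx₀⟩
  · rw [hE]; simp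
  · have hsub : S ⊆ {x₀, x₀ + a} := by
      intro x hx
      have huu : u x = u x₀ := Linj _ _ (by rw [hx, hx₀])
      have hd : (x - x₀) * ((x - x₀) - a) * a = 0 := by
        simp only [hu] at huu
        linear_combination huu + (- (a * (x - x₀) * x₀) - a ^ 2 * (x - x₀)) * h2K
      simp only [Set.mem_insert_iff, Set.mem_singleton_iff]
      rcases mul_eq_zero.mp hd with hd | hd
      · rcases mul_eq_zero.mp hd with hd | hd
        · exact Or.inl (by linear_combination hd)
        · exact Or.inr (by linear_combination hd)
      · exact absurd hd ha
    calc S.ncard ≤ ({x₀, x₀ + a} : Set K).ncard :=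
          Set.ncard_le_ncard hsub (Set.toFinite _)
      _ ≤ 2 := by
          have h1 := Set.ncard_insert_le x₀ ({x₀ + a} : Set K)
          simpa using h1
end

section
/- Let q = 2^n and let f ∈ F_q[x] be any polynomial. Then in F_q[x,y,z] the polynomial y + z divides the partial derivative ∂φ_f/∂x, and y + z divides ∂φ_f/∂y + ∂φ_f/∂z; equivalently, at every point with y = z one has φ_f'_x = 0 and φ_f'_y = φ_f'_z. -/
open MvPolynomial

/-- In a ring where `2 = 0`, the square of an increment divides the increment of the
formal derivative. -/
lemma aux_key {F R : Type*} [CommRing F] [CommRing R] [Algebra F R] (h2 : (2:R) = 0)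
    (f : Polynomial F) (a w : R) :
    w^2 ∣ Polynomial.aeval (a + w) f.derivative - Polynomial.aeval a f.derivative := by
  induction f using Polynomial.induction_on with
  | C c => simp
  | add p q hp hq =>
    simp only [Polynomial.derivative_add, map_add]
    convert dvd_add hp hq using 1
    ring
  | monomial n c _ =>
    rw [Polynomial.derivative_C_mul, Polynomial.derivative_X_pow]
    simp only [map_mul, Polynomial.aeval_C, map_natCast, map_pow, Polynomial.aeval_X,
      Nat.add_sub_cancel]
    push_cast
    rcases Nat.even_or_odd n with ⟨m, hm⟩ | hodd
    · have hsq : (a + w)^2 = a^2 + w^2 := by linear_combination (a*w)*h2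
      have heq : (a+w)^n - a^n = (a^2+w^2)^m - (a^2)^m := by
        rw [hm, ← two_mul, pow_mul, pow_mul, hsq]
      have hdvd : w^2 ∣ (a+w)^n - a^n := by
        rw [heq]
        have := sub_dvd_pow_sub_pow (a^2+w^2) (a^2) m
        rwa [add_sub_cancel_left] at this
      obtain ⟨g, hg⟩ := hdvd
      exact ⟨(algebraMap F R c) * ((n:R)+1) * g,
        by linear_combination ((algebraMap F R c) * ((n:R)+1)) * hg⟩
    · have hz : ((n:R) + 1) = 0 := by
        obtain ⟨k, hk⟩ := hodd
        have : ((n:ℕ) : R) + 1 = 2 * ((k:R) + 1) := by push_cast [hk]; ring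
        rw [this, h2, zero_mul]
      rw [hz]
      simp

/-- `X 1 + X 2` is prime in `F[x,y,z]`. -/
lemma aux_prime_w (F : Type*) [Field F] : Prime (X 1 + X 2 : MvPolynomial (Fin 3) F) := by
  rw [← MulEquiv.prime_iff (finSuccEquiv F 2).toMulEquiv]
  have h1 : (X 1 : MvPolynomial (Fin 3) F) = X (Fin.succ 0) := by norm_num
  have h2 : (X 2 : MvPolynomial (Fin 3) F) = X (Fin.succ 1) := by norm_num
  have key : (finSuccEquiv F 2).toMulEquiv (X 1 + X 2 : MvPolynomial (Fin 3) F)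
      = Polynomial.C (X 0 + X 1 : MvPolynomial (Fin 2) F) := by
    show (finSuccEquiv F 2) (X 1 + X 2 : MvPolynomial (Fin 3) F) = _
    rw [h1, h2, map_add, finSuccEquiv_X_succ, finSuccEquiv_X_succ, ← Polynomial.C_add]
  rw [key, Polynomial.prime_C_iff]
  rw [← MulEquiv.prime_iff (finSuccEquiv F 1).toMulEquiv]
  have h1' : (X 1 : MvPolynomial (Fin 2) F) = X (Fin.succ 0) := by norm_num
  have key2 : (finSuccEquiv F 1).toMulEquiv (X 0 + X 1 : MvPolynomial (Fin 2) F)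
      = Polynomial.X - Polynomial.C (-(X 0) : MvPolynomial (Fin 1) F) := by
    show (finSuccEquiv F 1) (X 0 + X 1 : MvPolynomial (Fin 2) F) = _
    rw [h1', map_add, finSuccEquiv_X_succ, finSuccEquiv_X_zero, map_neg, sub_neg_eq_add]
  rw [key2]
  exact Polynomial.prime_X_sub_C _

/-- The cancellation step: if `p * w * d = w^2 * g` with `w` prime not dividing `p`,
then `w ∣ d`. -/
lemma aux_cancel {R : Type*} [CommRing R] [IsDomain R] {w p d g : R}
    (hw : Prime w) (hnp : ¬ w ∣ p) (heq : p * w * d = w^2 * g) : w ∣ d := by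
  have h1 : w * (p * d) = w * (w * g) := by linear_combination heq
  have h2 : p * d = w * g := mul_left_cancel₀ hw.ne_zero h1
  have h3 : w ∣ p * d := ⟨g, h2⟩
  exact (hw.2.2 p d h3).resolve_left hnp

theorem y_add_z_dvd_partial_derivatives_of_phi
    (n : ℕ) (hn : 0 < n) (F : Type*) [Field F] [Fintype F]
    (hF : Fintype.card F = 2 ^ n) (f : Polynomial F)
    (φ : MvPolynomial (Fin 3) F) (hφ : e3 F * φ = fsum f) :
    (X 1 + X 2 : MvPolynomial (Fin 3) F) ∣ MvPolynomial.pderiv 0 φ ∧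
      (X 1 + X 2 : MvPolynomial (Fin 3) F) ∣
        (MvPolynomial.pderiv 1 φ + MvPolynomial.pderiv 2 φ) := by
  -- characteristic 2
  have hF2 : (2 : F) = 0 := by
    have hc : ((Fintype.card F : F)) = 0 := FiniteField.cast_card_eq_zero F
    rw [hF] at hc
    push_cast at hc
    exact pow_eq_zero_iff hn.ne' |>.mp hc
  have h2 : (2 : MvPolynomial (Fin 3) F) = 0 := by
    rw [show (2 : MvPolynomial (Fin 3) F) = C (2:F) from (map_ofNat C 2).symm, hF2, map_zero]
  have hw : Prime (X 1 + X 2 : MvPolynomial (Fin 3) F) := aux_prime_w F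
  -- w does not divide (X 0 + X 1) * (X 0 + X 2)
  have hnp : ¬ (X 1 + X 2 : MvPolynomial (Fin 3) F) ∣ (X 0 + X 1) * (X 0 + X 2) := by
    intro h
    rcases hw.2.2 _ _ h with h' | h' <;>
    · have := map_dvd (MvPolynomial.eval (fun i : Fin 3 => if i = 0 then (1:F) else 0)) h'
      simp at this
  -- derivatives of e3
  have he0 : pderiv 0 (e3 F) = (X 1 + X 2)^2 := by
    simp only [e3, pderiv_mul, pderiv_X_self, pderiv_X_of_ne (by decide : (1:Fin 3) ≠ 0),
      pderiv_X_of_ne (by decide : (2:Fin 3) ≠ 0), map_add, pderiv_X_self]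
    linear_combination (X 0 * (X 1 + X 2) : MvPolynomial (Fin 3) F) * h2
  have he12 : pderiv 1 (e3 F) + pderiv 2 (e3 F) = (X 1 + X 2)^2 := by
    simp only [e3, pderiv_mul, map_add, pderiv_X_self,
      pderiv_X_of_ne (by decide : (0:Fin 3) ≠ 1), pderiv_X_of_ne (by decide : (2:Fin 3) ≠ 1),
      pderiv_X_of_ne (by decide : (0:Fin 3) ≠ 2), pderiv_X_of_ne (by decide : (1:Fin 3) ≠ 2)]
    linear_combination (X 0^2 + 2*X 0*X 1 + 2*X 0*X 2 + X 1*X 2 : MvPolynomial (Fin 3) F) * h2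
  -- derivatives of fsum
  have hs0 : pderiv 0 (fsum f) =
      Polynomial.aeval (X 0 : MvPolynomial (Fin 3) F) f.derivative +
      Polynomial.aeval (X 0 + X 1 + X 2 : MvPolynomial (Fin 3) F) f.derivative := by
    simp only [fsum, map_add, Derivation.map_aeval, pderiv_X_self,
      pderiv_X_of_ne (by decide : (1:Fin 3) ≠ 0), pderiv_X_of_ne (by decide : (2:Fin 3) ≠ 0),
      smul_eq_mul]
    ring
  have hs12 : pderiv 1 (fsum f) + pderiv 2 (fsum f) =
      Polynomial.aeval (X 1 : MvPolynomial (Fin 3) F) f.derivative +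
      Polynomial.aeval (X 2 : MvPolynomial (Fin 3) F) f.derivative +
      2 * Polynomial.aeval (X 0 + X 1 + X 2 : MvPolynomial (Fin 3) F) f.derivative := by
    simp only [fsum, map_add, Derivation.map_aeval, pderiv_X_self,
      pderiv_X_of_ne (by decide : (0:Fin 3) ≠ 1), pderiv_X_of_ne (by decide : (2:Fin 3) ≠ 1),
      pderiv_X_of_ne (by decide : (0:Fin 3) ≠ 2), pderiv_X_of_ne (by decide : (1:Fin 3) ≠ 2),
      smul_eq_mul]
    ring
  constructor
  · -- first part
    have hder := congrArg (pderiv 0) hφ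
    rw [pderiv_mul, he0, hs0] at hder
    -- the RHS is divisible by (X1+X2)^2
    obtain ⟨g, hg⟩ := aux_key h2 f (X 0 : MvPolynomial (Fin 3) F) (X 1 + X 2)
    have heq : (X 0 + X 1) * (X 0 + X 2) * (X 1 + X 2) * pderiv 0 φ
        = (X 1 + X 2)^2 * (g - φ) := by
      have hrw : (X 0 : MvPolynomial (Fin 3) F) + (X 1 + X 2) = X 0 + X 1 + X 2 := by ring
      rw [hrw] at hg
      have he3 : e3 F = (X 0 + X 1) * (X 0 + X 2) * (X 1 + X 2) := rfl
      rw [he3] at hder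
      linear_combination hder + hg +
        (Polynomial.aeval (X 0 : MvPolynomial (Fin 3) F) f.derivative) * h2
    exact aux_cancel hw hnp heq
  · -- second part
    have hder := congrArg (fun p => pderiv 1 p + pderiv 2 p) hφ
    simp only [pderiv_mul] at hder
    obtain ⟨g, hg⟩ := aux_key h2 f (X 1 : MvPolynomial (Fin 3) F) (X 1 + X 2)
    have heq : (X 0 + X 1) * (X 0 + X 2) * (X 1 + X 2) * (pderiv 1 φ + pderiv 2 φ)
        = (X 1 + X 2)^2 * (g - φ) := by
      have harg : (X 1 : MvPolynomial (Fin 3) F) + (X 1 + X 2) = X 2 := by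
        linear_combination (X 1 : MvPolynomial (Fin 3) F) * h2
      rw [harg] at hg
      have he3 : e3 F = (X 0 + X 1) * (X 0 + X 2) * (X 1 + X 2) := rfl
      rw [he3] at hder
      rw [he3] at he12
      linear_combination hder + hg - he12 * φ + hs12 +
        (Polynomial.aeval (X 1 : MvPolynomial (Fin 3) F) f.derivative
          + Polynomial.aeval (X 0 + X 1 + X 2 : MvPolynomial (Fin 3) F) f.derivative) * h2
    exact aux_cancel hw hnp heq
end

section
/- Let k be an even integer with k ≥ 4 and let f(x) = x^{2^k+1} + x^5 ∈ F_2[x]. Then φ_f is not absolutely irreducible, i.e., φ_f is reducible over an algebraic closure of F_2. -/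
open MvPolynomial

local notation "K2" => AlgebraicClosure (ZMod 2)

private lemma four_pow_mod_three (j : ℕ) : ∃ m, 4 ^ j = 3 * m + 1 := by
  induction j with
  | zero => exact ⟨0, rfl⟩
  | succ n ih =>
    obtain ⟨m, hm⟩ := ih
    exact ⟨4 * m + 1, by rw [pow_succ, hm]; ring⟩

set_option maxHeartbeats 2000000 in
theorem counterexample_x5_not_abs_irred
    (k : ℕ) (hk : 4 ≤ k) (hkeven : Even k)
    (f : Polynomial (ZMod 2))
    (hf : f = Polynomial.X ^ (2 ^ k + 1) + Polynomial.X ^ 5)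
    (φ : MvPolynomial (Fin 3) (ZMod 2)) (hφ : e3 (ZMod 2) * φ = fsum f) :
    ¬ Irreducible (MvPolynomial.map
      (algebraMap (ZMod 2) (AlgebraicClosure (ZMod 2))) φ) := by
  intro hirr
  subst hf
  set Φ : MvPolynomial (Fin 3) K2 := MvPolynomial.map (algebraMap (ZMod 2) K2) φ with hΦ
  -- a primitive cube root of unity
  have hdeg : (Polynomial.X^2 + Polynomial.X + 1 : Polynomial K2).degree = 2 := by
    compute_degree!
  obtain ⟨ω, hωr⟩ := IsAlgClosed.exists_root (Polynomial.X^2 + Polynomial.X + 1 : Polynomial K2)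
    (by rw [hdeg]; decide)
  have hω0 : ω^2 + ω + 1 = 0 := by simpa [Polynomial.IsRoot] using hωr
  have hω3 : ω^3 = 1 := by linear_combination (ω - 1) * hω0
  have h2K : (2 : K2) = 0 := CharTwo.two_eq_zero
  -- 2^k ≡ 1 mod 3
  obtain ⟨j, hj⟩ := hkeven
  obtain ⟨m, hm⟩ : ∃ m, 2 ^ k = 3 * m + 1 := by
    have h4 : (2:ℕ) ^ k = 4 ^ j := by subst hj; rw [pow_add]; rw [← mul_pow]; norm_num
    rw [h4]; exact four_pow_mod_three j
  have hωk : ω ^ (2^k) = ω := by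
    rw [hm, pow_succ, pow_mul, hω3, one_pow, one_mul]
  have hω4 : ω ^ (4:ℕ) = ω := by
    rw [show (4:ℕ) = 3 + 1 from rfl, pow_succ, hω3, one_mul]
  have hω1k : (ω + 1) ^ (2^k) = ω + 1 := by
    rw [add_pow_char_pow ω 1 2 k, one_pow, hωk]
  have hω14 : (ω + 1) ^ (4:ℕ) = ω + 1 := by
    have := add_pow_char_pow ω 1 2 2
    norm_num at this
    rw [this, hω4]
  -- the mapped equation over K2
  have hφK : ((X 0 + X 1) * (X 0 + X 2) * (X 1 + X 2) : MvPolynomial (Fin 3) K2) * Φ =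
      (X 0)^(2^k+1) + (X 0)^5 + ((X 1)^(2^k+1) + (X 1)^5) + ((X 2)^(2^k+1) + (X 2)^5) +
        ((X 0 + X 1 + X 2)^(2^k+1) + (X 0 + X 1 + X 2)^5) := by
    have := congrArg (MvPolynomial.map (algebraMap (ZMod 2) K2)) hφ
    simpa [e3, fsum, map_add, map_mul, map_pow, Polynomial.aeval_X] using this
  -- finSuccEquiv facts
  have e0 : finSuccEquiv K2 2 (X 0) = Polynomial.X := finSuccEquiv_X_zero
  have e1 : finSuccEquiv K2 2 (X 1) = Polynomial.C (X 0) := by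
    simpa using finSuccEquiv_X_succ (R := K2) (n := 2) (j := 0)
  have e2 : finSuccEquiv K2 2 (X 2) = Polynomial.C (X 1) := by
    simpa using finSuccEquiv_X_succ (R := K2) (n := 2) (j := 1)
  have eC : ∀ a : K2, finSuccEquiv K2 2 (C a) = Polynomial.C (C a) := fun a => by
    simp [finSuccEquiv_apply]
  -- the substitution point
  set r : MvPolynomial (Fin 2) K2 := C ω * X 0 + C (ω+1) * X 1 with hr
  have hE := congrArg (⇑(finSuccEquiv K2 2)) hφK
  have hEv := congrArg (Polynomial.eval r) hE
  simp only [map_mul, map_add, map_pow, e0, e1, e2, Polynomial.eval_mul, Polynomial.eval_add,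
    Polynomial.eval_pow, Polynomial.eval_X, Polynomial.eval_C] at hEv
  -- the right-hand side evaluates to zero
  have frob : ∀ p q : MvPolynomial (Fin 2) K2, (p + q)^(2^k) = p^(2^k) + q^(2^k) :=
    fun p q => add_pow_char_pow p q 2 k
  have frob4 : ∀ p q : MvPolynomial (Fin 2) K2, (p + q)^(4:ℕ) = p^4 + q^4 := fun p q => by
    have := add_pow_char_pow p q 2 2
    norm_num at this
    exact this
  have hCpow : ∀ (a : K2) (n : ℕ), (C a : MvPolynomial (Fin 2) K2)^n = C (a^n) :=
    fun a n => (map_pow C a n).symm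
  have hrk : r^(2^k) = C ω * (X 0 : MvPolynomial (Fin 2) K2)^(2^k) + C (ω+1) * (X 1)^(2^k) := by
    rw [hr, frob, mul_pow, mul_pow, hCpow, hCpow, hωk, hω1k]
  have hr4 : r^(4:ℕ) = C ω * (X 0 : MvPolynomial (Fin 2) K2)^(4:ℕ) + C (ω+1) * (X 1)^(4:ℕ) := by
    rw [hr, frob4, mul_pow, mul_pow, hCpow, hCpow, hω4, hω14]
  have h2P2 : (2 : MvPolynomial (Fin 2) K2) = 0 := CharTwo.two_eq_zero
  have hzero : (Polynomial.eval r ((finSuccEquiv K2 2) Φ)) = 0 := by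
    have hLR : ((r + X 0) * (r + X 1) * (X 0 + X 1)) *
        (Polynomial.eval r ((finSuccEquiv K2 2) Φ)) = 0 := by
      rw [hEv]
      have p5 : ∀ p : MvPolynomial (Fin 2) K2, p^(5:ℕ) = p^(4:ℕ) * p := fun p => by
        rw [show (5:ℕ) = 4+1 from rfl, pow_succ]
      have pk1 : ∀ p : MvPolynomial (Fin 2) K2, p^(2^k+1) = p^(2^k) * p := fun p =>
        pow_succ p (2^k)
      rw [pk1 r, pk1 (X 0), pk1 (X 1), pk1 (r + X 0 + X 1), p5 r, p5 (X 0), p5 (X 1),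
        p5 (r + X 0 + X 1), frob (r + X 0) (X 1), frob r (X 0), frob4 (r + X 0) (X 1),
        frob4 r (X 0), hrk, hr4, hr]
      simp only [map_add, map_one]
      set w : MvPolynomial (Fin 2) K2 := C ω with hw
      set u : MvPolynomial (Fin 2) K2 := X 0 with hu
      set v : MvPolynomial (Fin 2) K2 := X 1 with hv
      set A : MvPolynomial (Fin 2) K2 := u^(2^k) with hA
      set B : MvPolynomial (Fin 2) K2 := v^(2^k) with hB
      clear_value w u v A B
      linear_combination (3*v^5 + u*v^4 + u^4*v + u^5 + 3*B*v + B*u + A*v + A*u + 3*w*v^5 +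
        2*w*u*v^4 + 2*w*u^4*v + w*u^5 + 3*w*B*v + 2*w*B*u + 2*w*A*v + w*A*u + w^2*v^5 +
        w^2*u*v^4 + w^2*u^4*v + w^2*u^5 + w^2*B*v + w^2*B*u + w^2*A*v + w^2*A*u) * h2P2
    rcases mul_eq_zero.mp hLR with h | h
    · exfalso
      have hev := congrArg (eval ![(1:K2), 0]) h
      simp [hr] at hev
      -- hev should say something like (ω+1)*ω = 0 or similar
      rcases hev with h1 | h1
      · exact one_ne_zero (α := K2) (by linear_combination hω0 - ω*h1)
      · exact one_ne_zero (α := K2) (by linear_combination hω0 - (ω+1)*h1)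
    · exact h
  -- the linear factor divides Φ
  have hdvd : (Polynomial.X - Polynomial.C r) ∣ (finSuccEquiv K2 2) Φ :=
    Polynomial.dvd_iff_isRoot.mpr hzero
  set l : MvPolynomial (Fin 3) K2 := X 0 + C ω * X 1 + C (ω+1) * X 2 with hl
  have hEl : (finSuccEquiv K2 2) l = Polynomial.X - Polynomial.C r := by
    rw [sub_eq_add_neg, CharTwo.neg_eq, hl, hr]
    simp only [map_add, map_mul, e0, e1, e2, eC]
    rw [add_assoc]
  obtain ⟨c, hc⟩ := hdvd
  have hfact : Φ = l * (finSuccEquiv K2 2).symm c := by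
    apply (finSuccEquiv K2 2).injective
    rw [map_mul, hEl, AlgEquiv.apply_symm_apply, hc]
  -- univariate specialization x ↦ X, y ↦ 1, z ↦ 0
  set ψ : MvPolynomial (Fin 3) K2 →ₐ[K2] Polynomial K2 := aeval ![Polynomial.X, 1, 0] with hψ
  have hψℓ : ψ l = Polynomial.X + Polynomial.C ω := by
    rw [hψ, hl]
    simp [Polynomial.algebraMap_eq]
  rcases hirr.isUnit_or_isUnit hfact with hu | hu
  · -- the linear factor is not a unit
    have h1 : IsUnit (ψ l) := hu.map ψ
    rw [hψℓ] at h1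
    have := Polynomial.natDegree_eq_zero_of_isUnit h1
    rw [Polynomial.natDegree_X_add_C] at this
    exact one_ne_zero this
  · -- the cofactor is not a unit either, by degree count
    have hψc : (ψ ((finSuccEquiv K2 2).symm c)).natDegree = 0 :=
      Polynomial.natDegree_eq_zero_of_isUnit (hu.map ψ)
    have h2P1 : (2 : Polynomial K2) = 0 := CharTwo.two_eq_zero
    have key1 : ((Polynomial.X + 1 : Polynomial K2))^(2^k) = Polynomial.X^(2^k) + 1 := by
      simpa using add_pow_char_pow (Polynomial.X : Polynomial K2) 1 2 k
    have key2 : ((Polynomial.X + 1 : Polynomial K2))^(4:ℕ) = Polynomial.X^4 + 1 := by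
      have := add_pow_char_pow (Polynomial.X : Polynomial K2) 1 2 2
      norm_num at this
      exact this
    have hψF : ψ ((X 0)^(2^k+1) + (X 0)^5 + ((X 1)^(2^k+1) + (X 1)^5) +
        ((X 2)^(2^k+1) + (X 2)^5) +
        ((X 0 + X 1 + X 2)^(2^k+1) + (X 0 + X 1 + X 2)^5) : MvPolynomial (Fin 3) K2) =
        Polynomial.X^(2^k) + Polynomial.X^4 := by
      have pk1P : ∀ p : Polynomial K2, p^(2^k+1) = p^(2^k) * p := fun p => pow_succ p (2^k)
      have p5P : ∀ p : Polynomial K2, p^(5:ℕ) = p^(4:ℕ) * p := fun p => by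
        rw [show (5:ℕ) = 4+1 from rfl, pow_succ]
      rw [hψ]
      simp only [map_add, map_pow, aeval_X, Matrix.cons_val_zero, Matrix.cons_val_one,
        Matrix.head_cons, Matrix.cons_val_two, Matrix.tail_cons, add_zero]
      rw [pk1P Polynomial.X, pk1P 1, pk1P 0, pk1P (Polynomial.X+1), p5P Polynomial.X, p5P 1,
        p5P 0, p5P (Polynomial.X+1), key1, key2]
      simp only [one_pow, mul_one, mul_zero, add_zero]
      linear_combination (Polynomial.X^(2^k)*Polynomial.X + Polynomial.X^(4:ℕ)*Polynomial.X +
        Polynomial.X + 2) * h2P1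
    have hψeq := congrArg ψ hφK
    rw [hfact, hψF] at hψeq
    simp only [map_mul, map_add, hψ, aeval_X, Matrix.cons_val_zero, Matrix.cons_val_one,
      Matrix.head_cons, Matrix.cons_val_two, Matrix.tail_cons, add_zero] at hψeq
    rw [← hψ] at hψeq
    -- hψeq : (X+1)*(X+0)*(1+0) * (ψ l * ψ c') = X^(2^k) + X^4  (roughly)
    have hlow : (2^k : ℕ) ≤ (Polynomial.X^(2^k) + Polynomial.X^(4:ℕ) : Polynomial K2).natDegree := by
      apply Polynomial.le_natDegree_of_ne_zero
      have h16 : (16:ℕ) ≤ 2^k := by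
        calc (16:ℕ) = 2^4 := by norm_num
        _ ≤ 2^k := Nat.pow_le_pow_right (by norm_num) hk
      rw [Polynomial.coeff_add, Polynomial.coeff_X_pow, Polynomial.coeff_X_pow]
      have h4 : ¬ ((2:ℕ)^k = 4) := by omega
      simp [h4]
    rw [← hψeq] at hlow
    have hup : ((Polynomial.X + 1) * Polynomial.X * 1 *
        (ψ l * ψ ((finSuccEquiv K2 2).symm c)) : Polynomial K2).natDegree ≤ 4 := by
      refine le_trans (Polynomial.natDegree_mul_le) ?_
      have b1 : ((Polynomial.X + 1) * Polynomial.X * 1 : Polynomial K2).natDegree ≤ 3 := by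
        refine le_trans (Polynomial.natDegree_mul_le) ?_
        refine le_trans (Nat.add_le_add_right (Polynomial.natDegree_mul_le) _) ?_
        have hX1 : ((Polynomial.X + 1 : Polynomial K2)).natDegree = 1 := by
          rw [← Polynomial.C_1, Polynomial.natDegree_X_add_C]
        simp [hX1, Polynomial.natDegree_X]
      have b2 : (ψ l * ψ ((finSuccEquiv K2 2).symm c)).natDegree ≤ 1 := by
        refine le_trans (Polynomial.natDegree_mul_le) ?_
        rw [hψc, hψℓ, Polynomial.natDegree_X_add_C]
      omega
    have h16 : (16:ℕ) ≤ 2^k := by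
      calc (16:ℕ) = 2^4 := by norm_num
      _ ≤ 2^k := Nat.pow_le_pow_right (by norm_num) hk
    omega
end
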